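/- For every positive integer n and all complex numbers s_0, …, s_{n−1}, there exists f ∈ ℂ with |f| = 1 such that |s_i^n − f^n| ≥ 1/(2n) for all i = 0, …, n−1. -/

import Mathlib

open Real Complex

private lemma lemA (x : ℝ) (hx : |x| ≤ π) :
    2 * |x| / π ≤ ‖Complex.exp (x * I) - 1‖ := by
  have hπ := Real.pi_pos
  have hsq : ‖Complex.exp (↑x * I) - 1‖ ^ 2 = 2 - 2 * Real.cos x := by
    rw [Complex.sq_norm, Complex.normSq_apply]
    simp [Complex.exp_ofReal_mul_I_re, Complex.exp_ofReal_mul_I_im]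
    nlinarith [Real.sin_sq_add_cos_sq x]
  have hcos := Real.cos_le_one_sub_mul_cos_sq hx
  refine le_of_pow_le_pow_left₀ two_ne_zero (by positivity) ?_
  rw [hsq, div_pow]
  rw [div_le_iff₀ (by positivity)]
  have h2 : 2 / π ^ 2 * x ^ 2 * π ^ 2 = 2 * x ^ 2 := by field_simp
  nlinarith [_root_.sq_abs x, h2, mul_le_mul_of_nonneg_right hcos (le_of_lt (pow_pos hπ 2))]

private lemma sep_aux (n : ℕ) (hn : 1 ≤ n) (a b : ℕ) (hab : a < b) (hb : b < 2 * n + 1) :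
    1 / (n : ℝ) < ‖Complex.exp ((2 * π * b / (2 * n + 1) : ℝ) * I) -
      Complex.exp ((2 * π * a / (2 * n + 1) : ℝ) * I)‖ := by
  have hπ := Real.pi_pos
  have hn' : (1 : ℝ) ≤ n := by exact_mod_cast hn
  have hN : (0 : ℝ) < 2 * n + 1 := by positivity
  set d : ℕ := b - a with hd
  have hd1 : 1 ≤ d := by omega
  have hd2 : d ≤ 2 * n := by omega
  have hba : (b : ℝ) = a + d := by
    have : b = a + d := by omega
    exact_mod_cast this
  set r : ℝ := if d ≤ n then (d : ℝ) else (d : ℝ) - (2 * n + 1) with hr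
  set c : ℝ := if d ≤ n then 0 else 2 * π with hc
  have hdn : (d : ℝ) ≤ 2 * n := by exact_mod_cast hd2
  have hdn1 : (1 : ℝ) ≤ d := by exact_mod_cast hd1
  have hr1 : 1 ≤ |r| := by
    rw [hr]; split_ifs with h
    · rw [_root_.abs_of_nonneg (show (0:ℝ) ≤ (d:ℝ) by positivity)]; exact hdn1
    · have hnd : (n : ℝ) + 1 ≤ d := by exact_mod_cast Nat.lt_of_not_le h
      rw [_root_.abs_of_nonpos (by linarith)]; linarith
  have hr2 : |r| ≤ n := by
    rw [hr]; split_ifs with h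
    · rw [_root_.abs_of_nonneg (show (0:ℝ) ≤ (d:ℝ) by positivity)]; exact_mod_cast h
    · have hnd : (n : ℝ) + 1 ≤ d := by exact_mod_cast Nat.lt_of_not_le h
      rw [_root_.abs_of_nonpos (by linarith)]; linarith
  set x : ℝ := 2 * π * r / (2 * n + 1) with hx
  have hxabs : |x| = 2 * π * |r| / (2 * n + 1) := by
    rw [hx, abs_div, abs_of_pos hN, abs_mul, abs_of_pos (by positivity : (0:ℝ) < 2 * π)]
  have hxπ : |x| ≤ π := by
    rw [hxabs, div_le_iff₀ hN]; nlinarith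
  have hangle : 2 * π * (b : ℝ) / (2 * n + 1) = 2 * π * a / (2 * n + 1) + x + c := by
    rw [hx, hr, hc]; split_ifs with h
    · rw [hba]; field_simp; ring
    · rw [hba]; field_simp; ring
  have hcval : Complex.exp ((c : ℝ) * I) = 1 := by
    rw [hc]; split_ifs with h
    · simp
    · rw [show ((((2:ℝ) * π : ℝ)) : ℂ) * I = 2 * ↑π * I by push_cast; ring]
      exact Complex.exp_two_pi_mul_I
  have hexp : Complex.exp ((2 * π * b / (2 * n + 1) : ℝ) * I) =
      Complex.exp ((2 * π * a / (2 * n + 1) : ℝ) * I) * Complex.exp ((x : ℝ) * I) := by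
    calc Complex.exp ((2 * π * b / (2 * n + 1) : ℝ) * I)
        = Complex.exp ((2 * π * a / (2 * n + 1) : ℝ) * I) * Complex.exp ((x : ℝ) * I) *
            Complex.exp ((c : ℝ) * I) := by
          rw [← Complex.exp_add, ← Complex.exp_add]
          congr 1
          rw [show (((2 * π * (b:ℝ) / (2 * n + 1) : ℝ)) : ℂ) =
            ((2 * π * a / (2 * n + 1) : ℝ) : ℂ) + (x : ℝ) + (c : ℝ) by
              exact_mod_cast congrArg (fun t : ℝ => (t : ℂ)) hangle]
          ring
      _ = _ := by rw [hcval, mul_one]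
  rw [hexp, show Complex.exp ((2 * π * a / (2 * n + 1) : ℝ) * I) * Complex.exp ((x:ℝ) * I) -
        Complex.exp ((2 * π * a / (2 * n + 1) : ℝ) * I) =
        Complex.exp ((2 * π * a / (2 * n + 1) : ℝ) * I) * (Complex.exp ((x:ℝ) * I) - 1) by ring,
    norm_mul, Complex.norm_exp_ofReal_mul_I, one_mul]
  refine lt_of_lt_of_le ?_ (lemA x hxπ)
  rw [hxabs]
  rw [div_lt_div_iff₀ (by positivity) (by positivity)]
  have : 2 * (2 * π * |r| / (2 * n + 1)) * n = 4 * π * |r| * n / (2 * n + 1) := by ring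
  rw [this, lt_div_iff₀ hN]
  have h5 : 4 * π * (n:ℝ) * 1 ≤ 4 * π * n * |r| :=
    mul_le_mul_of_nonneg_left hr1 (by positivity)
  nlinarith [hπ, hn', h5]

theorem exists_unit_f_far_from_powers (n : ℕ) (hn : 1 ≤ n) (s : Fin n → ℂ) :
    ∃ f : ℂ, ‖f‖ = 1 ∧
      ∀ i, 1 / (2 * (n : ℝ)) ≤ ‖s i ^ n - f ^ n‖ := by
  classical
  have hn' : (1 : ℝ) ≤ n := by exact_mod_cast hn
  set θ : Fin (2 * n + 1) → ℝ := fun k => 2 * π * k / (2 * n + 1) with hθ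
  set w : Fin (2 * n + 1) → ℂ := fun k => Complex.exp ((θ k : ℝ) * I) with hw
  have sep : ∀ k k' : Fin (2 * n + 1), k ≠ k' → 1 / (n : ℝ) < ‖w k - w k'‖ := by
    intro k k' hkk'
    rcases lt_or_gt_of_ne (fun h => hkk' (Fin.ext h) : (k : ℕ) ≠ (k' : ℕ)) with h | h
    · rw [show w k - w k' = -(w k' - w k) by ring, norm_neg]
      exact sep_aux n hn k k' h k'.isLt
    · exact sep_aux n hn k' k h k.isLt
  set B : Finset (Fin (2 * n + 1)) :=
    Finset.univ.filter (fun k => ∃ i, ‖s i ^ n - w k‖ < 1 / (2 * n)) with hB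
  have hBcard : B.card ≤ n := by
    have hwit : ∀ k ∈ B, ∃ i : Fin n, ‖s i ^ n - w k‖ < 1 / (2 * n) := by
      intro k hk; simpa [hB] using hk
    choose g hg using hwit
    have hinj : Set.InjOn (fun k => if h : k ∈ B then g k h else ⟨0, hn⟩) B := by
      intro k hk k' hk' heq
      simp only [Finset.mem_coe] at hk hk'
      by_contra hne
      simp only [dif_pos hk, dif_pos hk'] at heq
      have h1 := hg k hk
      have h2 := hg k' hk'
      rw [heq] at h1
      have htri : ‖w k - w k'‖ ≤
          ‖w k - s (g k' hk') ^ n‖ + ‖s (g k' hk') ^ n - w k'‖ :=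
        norm_sub_le_norm_sub_add_norm_sub _ _ _
      have h1' : ‖w k - s (g k' hk') ^ n‖ < 1 / (2 * n) := by
        rw [norm_sub_rev]; exact h1
      have := sep k k' hne
      have hhalf : 1 / (2 * (n : ℝ)) + 1 / (2 * n) = 1 / n := by
        field_simp
        norm_num
      linarith
    calc B.card ≤ (Finset.univ : Finset (Fin n)).card :=
          Finset.card_le_card_of_injOn _ (fun k _ => Finset.mem_univ _) hinj
      _ = n := by simp
  have hex : ∃ k : Fin (2 * n + 1), k ∉ B := by
    by_contra h
    push_neg at h
    have : (Finset.univ : Finset (Fin (2 * n + 1))).card ≤ B.card :=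
      Finset.card_le_card (fun k _ => h k)
    simp only [Finset.card_univ, Fintype.card_fin] at this
    omega
  obtain ⟨k, hk⟩ := hex
  refine ⟨Complex.exp (((θ k / n : ℝ)) * I), Complex.norm_exp_ofReal_mul_I _, ?_⟩
  have hfn : Complex.exp (((θ k / n : ℝ)) * I) ^ n = w k := by
    rw [← Complex.exp_nat_mul]
    congr 1
    push_cast
    have hn0 : (n : ℂ) ≠ 0 := by exact_mod_cast (by omega : n ≠ 0)
    field_simp
  rw [hfn]
  intro i
  by_contra hlt
  push_neg at hlt
  exact hk (Finset.mem_filter.mpr ⟨Finset.mem_univ _, ⟨i, hlt⟩⟩)
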